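/- For integers n ≥ 1 and k ≥ 0, the number of chains e₁ ≤ e₂ ≤ ⋯ ≤ e_{u-1} in the poset of n-tuples of nonnegative integers with coordinate-wise order and total sum at most k equals the binomial coefficient C(n(u-1)+k, k), for every integer u ≥ 2. -/
import Mathlib

open Finset

private def myext {m n : ℕ} (d : Fin m → Fin n → ℕ) : ℕ → Fin n → ℕ :=
  fun t i => if h : t < m then d ⟨t, h⟩ i else 0

private def mypsum {m n : ℕ} (d : Fin m → Fin n → ℕ) : Fin m → Fin n → ℕ :=
  fun s i => ∑ t ∈ range (s.1 + 1), myext d t i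

private def mydif {m n : ℕ} (c : Fin m → Fin n → ℕ) : Fin m → Fin n → ℕ :=
  fun t i => c t i - (if t.1 = 0 then 0 else myext c (t.1 - 1) i)

private lemma mypsum_mydif {m n : ℕ} {c : Fin m → Fin n → ℕ} (hc : Monotone c) :
    mypsum (mydif c) = c := by
  funext s i
  suffices H : ∀ j (hj : j < m), ∑ t ∈ range (j + 1), myext (mydif c) t i = c ⟨j, hj⟩ i by
    exact H s.1 s.isLt
  intro j
  induction j with
  | zero =>
    intro hj
    simp [myext, mydif, hj]
  | succ j ih =>
    intro hj
    have hj' : j < m := by omega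
    rw [Finset.sum_range_succ, ih hj']
    have hle : c ⟨j, hj'⟩ i ≤ c ⟨j + 1, hj⟩ i := by
      have : (⟨j, hj'⟩ : Fin m) ≤ ⟨j + 1, hj⟩ := by simp [Fin.le_def]
      exact hc this i
    have : myext (mydif c) (j + 1) i = c ⟨j + 1, hj⟩ i - c ⟨j, hj'⟩ i := by
      simp [myext, mydif, hj, hj']
    omega

private lemma mydif_mypsum {m n : ℕ} (d : Fin m → Fin n → ℕ) :
    mydif (mypsum d) = d := by
  funext t i
  rcases t with ⟨tv, htv⟩
  rcases tv with _ | j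
  · simp [mydif, mypsum, myext, htv]
  · have hjm : j < m := by omega
    have h1 : myext (mypsum d) j i = ∑ u ∈ range (j + 1), myext d u i := by
      simp [myext, mypsum, hjm]
    have h2 : mypsum d ⟨j + 1, htv⟩ i
        = ∑ u ∈ range (j + 1), myext d u i + myext d (j + 1) i := by
      simp [mypsum, Finset.sum_range_succ]
    have h3 : myext d (j + 1) i = d ⟨j + 1, htv⟩ i := by
      simp [myext, htv]
    have hvv : ((⟨j + 1, htv⟩ : Fin m) : ℕ) = j + 1 := rfl
    simp only [mydif, hvv]
    rw [if_neg (Nat.succ_ne_zero j), Nat.add_sub_cancel, h1, h2, h3]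
    omega

private lemma mono_mypsum {m n : ℕ} (d : Fin m → Fin n → ℕ) : Monotone (mypsum d) := by
  intro s s' hss i
  exact Finset.sum_le_sum_of_subset (Finset.range_subset_range.2 (by

    have := Fin.le_def.1 hss; omega))

private lemma sum_mypsum_top {m n : ℕ} (hm : 0 < m) (d : Fin m → Fin n → ℕ) :
    ∑ i, mypsum d ⟨m - 1, by omega⟩ i = ∑ t, ∑ i, d t i := by
  have hrange : (m - 1) + 1 = m := by omega
  rw [Finset.sum_comm]
  refine Finset.sum_congr rfl fun t _ => ?_
  simp only [mypsum, hrange]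
  rw [← Fin.sum_univ_eq_sum_range (fun u => myext d u t) m]
  exact Finset.sum_congr rfl fun u _ => by simp [myext, u.isLt]

private lemma aux_card (n k m : ℕ) (hm : 0 < m) :
    Nat.card {c : Fin m → (Fin n → ℕ) // Monotone c ∧ ∀ s, ∑ i, c s i ≤ k} =
    Nat.choose (n * m + k) k := by
  set top : Fin m := ⟨m - 1, by omega⟩ with htop
  have htople : ∀ s : Fin m, s ≤ top := fun s => by
    simp only [Fin.le_def, htop]; omega
  -- Step 1: chains ↔ difference tuples with total sum ≤ k
  let E1 : {c : Fin m → (Fin n → ℕ) // Monotone c ∧ ∀ s, ∑ i, c s i ≤ k} ≃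
      {d : Fin m → Fin n → ℕ // ∑ t, ∑ i, d t i ≤ k} :=
    { toFun := fun c => ⟨mydif c.1, by
        have h := sum_mypsum_top hm (mydif c.1)
        rw [mypsum_mydif c.2.1] at h
        rw [← h]
        exact c.2.2 top⟩
      invFun := fun d => ⟨mypsum d.1, mono_mypsum d.1, fun s => by
        have h1 : ∑ i, mypsum d.1 s i ≤ ∑ i, mypsum d.1 top i :=
          Finset.sum_le_sum fun i _ => mono_mypsum d.1 (htople s) i
        have h2 := sum_mypsum_top hm d.1
        calc ∑ i, mypsum d.1 s i ≤ ∑ i, mypsum d.1 top i := h1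
          _ = ∑ t, ∑ i, d.1 t i := h2
          _ ≤ k := d.2⟩
      left_inv := fun c => Subtype.ext (mypsum_mydif c.2.1)
      right_inv := fun d => Subtype.ext (mydif_mypsum d.1) }
  -- Step 2: uncurry to Fin (m*n)
  let e2 : (Fin m → Fin n → ℕ) ≃ (Fin (m * n) → ℕ) :=
    (Equiv.curry _ _ _).symm.trans (Equiv.arrowCongr finProdFinEquiv (Equiv.refl ℕ))
  have he2 : ∀ d : Fin m → Fin n → ℕ, ∑ p, e2 d p = ∑ t, ∑ i, d t i := by
    intro d
    have h := Fintype.sum_equiv finProdFinEquiv (fun q : Fin m × Fin n => d q.1 q.2)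
      (fun p => e2 d p) (fun q => by simp [e2, Equiv.curry, Function.uncurry])
    rw [← h, Fintype.sum_prod_type]
  let E2 : {d : Fin m → Fin n → ℕ // ∑ t, ∑ i, d t i ≤ k} ≃
      {g : Fin (m * n) → ℕ // ∑ p, g p ≤ k} :=
    e2.subtypeEquiv fun d => by rw [he2]
  -- Step 3: add slack variable
  let E3 : {g : Fin (m * n) → ℕ // ∑ p, g p ≤ k} ≃
      {h : Fin (m * n + 1) → ℕ // ∑ p, h p = k} :=
    { toFun := fun g => ⟨Fin.cons (k - ∑ p, g.1 p) g.1, by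
        rw [Fin.sum_univ_succ]
        simp only [Fin.cons_zero, Fin.cons_succ]
        omega⟩
      invFun := fun h => ⟨Fin.tail h.1, by
        have := h.2
        rw [Fin.sum_univ_succ] at this
        simp only [Fin.tail]
        omega⟩
      left_inv := fun g => Subtype.ext (by dsimp only; exact Fin.tail_cons _ _)
      right_inv := fun h => by
        apply Subtype.ext
        dsimp only
        have hs := h.2
        rw [Fin.sum_univ_succ] at hs
        have htt : ∑ p, Fin.tail h.1 p = ∑ i : Fin (m * n), h.1 i.succ := rfl
        have : k - ∑ p, Fin.tail h.1 p = h.1 0 := by omega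
        rw [this]
        exact Fin.cons_self_tail h.1 }
  -- Step 4: stars and bars
  let E4 : {h : Fin (m * n + 1) → ℕ // ∑ p, h p = k} ≃ Sym (Fin (m * n + 1)) k :=
    (Sym.equivNatSumOfFintype (Fin (m * n + 1)) k).symm
  rw [Nat.card_congr (((E1.trans E2).trans E3).trans E4), Nat.card_eq_fintype_card,
    Sym.card_sym_eq_choose]
  congr 1
  simp [Fintype.card_fin]
  ring

theorem chains_count_sum_le (n k u : ℕ) (hn : 1 ≤ n) (hu : 2 ≤ u) :
    Nat.card {c : Fin (u - 1) → (Fin n → ℕ) //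
      Monotone c ∧ ∀ s, ∑ i, c s i ≤ k} =
    Nat.choose (n * (u - 1) + k) k := by
  exact aux_card n k (u - 1) (by omega)
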